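/- Σ_{k=1}^{n} 1/max{1, N_k} ≤ M·log(8n), where log denotes the natural logarithm. -/

import Mathlib

open Finset

lemma rank_sum_aux (S : Finset ℕ) (g : ℕ → ℝ) :
    ∑ k ∈ S, g ((S.filter (· < k)).card) = ∑ j ∈ Finset.range S.card, g j := by
  have key : ∀ a ∈ S, ∀ b ∈ S, a < b →
      (S.filter (· < a)).card < (S.filter (· < b)).card := by
    intro a ha b hb hab
    apply Finset.card_lt_card
    refine ⟨Finset.monotone_filter_right S (fun i _ hi => lt_trans hi hab), fun hsub => ?_⟩
    have : a ∈ S.filter (· < a) := hsub (Finset.mem_filter.mpr ⟨ha, hab⟩)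
    simp at this
  have hmem : ∀ k (hk : k ∈ S), (S.filter (· < k)).card ∈ Finset.range S.card := by
    intro k hk
    rw [Finset.mem_range]
    exact Finset.card_lt_card ⟨Finset.filter_subset _ _,
      fun hsub => by simpa using Finset.mem_filter.mp (hsub hk)⟩
  have hinj : ∀ a₁ a₂ (ha₁ : a₁ ∈ S) (ha₂ : a₂ ∈ S),
      (S.filter (· < a₁)).card = (S.filter (· < a₂)).card → a₁ = a₂ := by
    intro a b ha hb hab
    rcases lt_trichotomy a b with h | h | h
    · exact absurd hab (ne_of_lt (key a ha b hb h))
    · exact h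
    · exact absurd hab.symm (ne_of_lt (key b hb a ha h))
  exact Finset.sum_bij (fun k _ => (S.filter (· < k)).card) hmem
    (fun a ha b hb h => hinj a b ha hb h)
    (fun b hb => by
      obtain ⟨a, ha, h⟩ := Finset.surj_on_of_inj_on_of_card_le
        (fun k (_ : k ∈ S) => (S.filter (· < k)).card) hmem hinj
        (by rw [Finset.card_range]) b hb
      exact ⟨a, ha, h.symm⟩)
    (fun a ha => rfl)

lemma range_sum_le (n m : ℕ) (hn : 1 ≤ n) (hm : m ≤ n) :
    ∑ j ∈ Finset.range m, 1 / max 1 ((j : ℝ)) ≤ Real.log (8 * n) := by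
  have hlog8 : (2 : ℝ) ≤ Real.log 8 := by
    rw [show (8:ℝ) = 2^3 by norm_num, Real.log_pow]
    have := Real.log_two_gt_d9
    push_cast
    nlinarith
  have hlogn : (0:ℝ) ≤ Real.log n := Real.log_natCast_nonneg n
  have hsplit : Real.log (8 * n) = Real.log 8 + Real.log n := by
    rw [Real.log_mul (by norm_num) (by exact_mod_cast Nat.one_le_iff_ne_zero.mp hn)]
  rcases Nat.eq_zero_or_pos m with rfl | hm1
  · simp; linarith
  obtain ⟨t, rfl⟩ := Nat.exists_eq_add_of_lt hm1
  rw [zero_add, Finset.sum_range_succ']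
  have h1 : ∀ i : ℕ, 1 / max 1 ((i + 1 : ℕ) : ℝ) = ((i:ℝ) + 1)⁻¹ := by
    intro i
    rw [max_eq_right (by exact_mod_cast Nat.one_le_iff_ne_zero.mpr (Nat.succ_ne_zero i))]
    push_cast
    rw [one_div]
  have h2 : ∑ i ∈ Finset.range t, 1 / max 1 (((i + 1 : ℕ)) : ℝ)
      = (harmonic t : ℝ) := by
    rw [harmonic]
    push_cast
    exact Finset.sum_congr rfl (fun i _ => by rw [← h1 i]; push_cast; ring_nf)
  rw [h2]
  have h3 : (harmonic t : ℝ) ≤ 1 + Real.log t := harmonic_le_one_add_log t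
  have h4 : Real.log t ≤ Real.log n := by
    rcases Nat.eq_zero_or_pos t with rfl | ht
    · simpa using hlogn
    · exact Real.log_le_log (by exact_mod_cast ht) (by exact_mod_cast by omega)
  simp only [Nat.cast_zero, max_eq_left (le_refl (1:ℝ)) ]
  have : 1 / max 1 ((0:ℝ)) = 1 := by norm_num
  rw [this, hsplit]
  linarith

/-- Let `X` be a finite nonempty type with `|X| = M`, `n ≥ 1`, and `x_1, …, x_n` a sequence in
`X`. With `N_k = #{i : 1 ≤ i < k, x_i = x_k}`, we have
`∑_{k=1}^{n} 1/(max 1 N_k) ≤ M·log(8·n)`. -/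
theorem stmt_6 {X : Type*} [Fintype X] [Nonempty X] [DecidableEq X]
    (M : ℕ) (hM : Fintype.card X = M) (n : ℕ) (hn : 1 ≤ n) (x : ℕ → X) :
    ∑ k ∈ Finset.Icc 1 n,
      1 / max 1 ((((Finset.Ico 1 k).filter (fun i => x i = x k)).card : ℝ))
      ≤ M * Real.log (8 * n) := by
  subst hM
  rw [← Finset.sum_fiberwise (Finset.Icc 1 n) x
    (fun k => 1 / max 1 ((((Finset.Ico 1 k).filter (fun i => x i = x k)).card : ℝ)))]
  have hfiber : ∀ v : X,
      ∑ k ∈ (Finset.Icc 1 n).filter (fun k => x k = v),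
        1 / max 1 ((((Finset.Ico 1 k).filter (fun i => x i = x k)).card : ℝ))
      ≤ Real.log (8 * n) := by
    intro v
    set S := (Finset.Icc 1 n).filter (fun k => x k = v) with hSdef
    have hS : ∀ k ∈ S, ((Finset.Ico 1 k).filter (fun i => x i = x k))
        = S.filter (· < k) := by
      intro k hk
      simp only [hSdef, Finset.mem_filter, Finset.mem_Icc] at hk
      obtain ⟨⟨hk1, hkn⟩, hkv⟩ := hk
      ext i
      simp only [hSdef, Finset.mem_filter, Finset.mem_Ico, Finset.mem_Icc, hkv]
      constructor
      · rintro ⟨⟨h1, h2⟩, h3⟩; exact ⟨⟨⟨h1, by omega⟩, h3⟩, h2⟩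
      · rintro ⟨⟨⟨h1, _⟩, h3⟩, h2⟩; exact ⟨⟨h1, h2⟩, h3⟩
    calc ∑ k ∈ S, 1 / max 1 ((((Finset.Ico 1 k).filter (fun i => x i = x k)).card : ℝ))
        = ∑ k ∈ S, 1 / max 1 (((S.filter (· < k)).card : ℝ)) :=
          Finset.sum_congr rfl (fun k hk => by rw [hS k hk])
      _ = ∑ j ∈ Finset.range S.card, 1 / max 1 ((j : ℝ)) :=
          rank_sum_aux S (fun j => 1 / max 1 ((j : ℝ)))
      _ ≤ Real.log (8 * n) := range_sum_le n S.card hn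
          (le_trans (Finset.card_filter_le _ _) (by rw [Nat.card_Icc]; omega))
  calc ∑ v : X, ∑ k ∈ (Finset.Icc 1 n).filter (fun k => x k = v),
        1 / max 1 ((((Finset.Ico 1 k).filter (fun i => x i = x k)).card : ℝ))
      ≤ ∑ _v : X, Real.log (8 * n) := Finset.sum_le_sum (fun v _ => hfiber v)
    _ = Fintype.card X * Real.log (8 * n) := by
        rw [Finset.sum_const, Finset.card_univ, nsmul_eq_mul]
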